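/- Every straight domain is a locally divided domain: if A is an integral domain such that every prime ideal of A is straight, then for every maximal ideal m of A the localization A_m is a divided domain (equivalently, every prime ideal of A is locally divided). -/

import Mathlib

/-- The subset `p·A_m = {x/y : x ∈ p, y ∈ A \ m}` of the ambient field `F`. -/
def locSet {F : Type*} [Field F] (A : Subring F) (p m : Ideal A) : Set F :=
  {z | ∃ x : ↥A, x ∈ p ∧ ∃ y : ↥A, y ∉ m ∧ z = (x : F) / (y : F)}

/-- `A` is straight at the prime ideal `p`: for every overring `B` of `A`
(subring of the fraction field `F` of `A` containing `A`), the `A/p`-module `B/pB`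
is torsion-free, stated elementwise: for `a ∈ A \ p` and `b ∈ B`,
if `a·b ∈ pB` then `b ∈ pB`. -/
def IsStraightAt {F : Type*} [Field F] (A : Subring F) (p : Ideal A) : Prop :=
  ∀ (B : Subring F) (hAB : A ≤ B), ∀ a : ↥A, a ∉ p → ∀ b : ↥B,
    Subring.inclusion hAB a * b ∈ p.map (Subring.inclusion hAB) →
    b ∈ p.map (Subring.inclusion hAB)

/-- `p` is a locally divided prime ideal of `A`: `p·A_m = p·A_p` (as subsets of the
fraction field) for every maximal ideal `m` containing `p`. -/
def IsLocallyDividedAt {F : Type*} [Field F] (A : Subring F) (p : Ideal A) : Prop :=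
  ∀ m : Ideal A, m.IsMaximal → p ≤ m → locSet A p m = locSet A p p

/-- The localization `A_m` of `A` at the prime ideal `m`, realized as the subring
`{x/y : x ∈ A, y ∈ A \ m}` of the fraction field of `A`. -/
def locSubring {F : Type*} [Field F] (A : Subring F) (m : Ideal A) (hm : m.IsPrime) :
    Subring F where
  carrier := {z | ∃ x y : ↥A, y ∉ m ∧ z = (x : F) / (y : F)}
  zero_mem' := ⟨0, 1, fun h => hm.ne_top (m.eq_top_of_isUnit_mem h isUnit_one), by simp⟩
  one_mem' := ⟨1, 1, fun h => hm.ne_top (m.eq_top_of_isUnit_mem h isUnit_one), by simp⟩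
  add_mem' := by
    rintro a b ⟨x1, y1, hy1, rfl⟩ ⟨x2, y2, hy2, rfl⟩
    refine ⟨x1 * y2 + x2 * y1, y1 * y2, fun h => (hm.mem_or_mem h).elim hy1 hy2, ?_⟩
    have h1 : (y1 : F) ≠ 0 := fun h =>
      hy1 (by rw [show y1 = 0 from Subtype.ext h]; exact m.zero_mem)
    have h2 : (y2 : F) ≠ 0 := fun h =>
      hy2 (by rw [show y2 = 0 from Subtype.ext h]; exact m.zero_mem)
    push_cast
    field_simp
  mul_mem' := by
    rintro a b ⟨x1, y1, hy1, rfl⟩ ⟨x2, y2, hy2, rfl⟩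
    refine ⟨x1 * x2, y1 * y2, fun h => (hm.mem_or_mem h).elim hy1 hy2, ?_⟩
    push_cast
    rw [div_mul_div_comm]
  neg_mem' := by
    rintro a ⟨x, y, hy, rfl⟩
    exact ⟨-x, y, hy, by push_cast; rw [neg_div]⟩


/-- The subring `B[w]` of `K`: the range of polynomial evaluation at `w`. -/
noncomputable def polyRange {K : Type*} [Field K] (B : Subring K) (w : K) : Subring K :=
  (Polynomial.eval₂RingHom B.subtype w).range

theorem le_polyRange {K : Type*} [Field K] (B : Subring K) (w : K) : B ≤ polyRange B w :=
  fun b hb => ⟨Polynomial.C ⟨b, hb⟩, Polynomial.eval₂_C _ _⟩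

theorem mem_polyRange_self {K : Type*} [Field K] (B : Subring K) (w : K) : w ∈ polyRange B w :=
  ⟨Polynomial.X, Polynomial.eval₂_X _ _⟩

theorem extract {K : Type*} [Field K] {A B : Subring K} (hAB : A ≤ B) (q : Ideal ↥B)
    (p : Ideal ↥A) (hpq : ∀ a : ↥A, a ∈ p → Subring.inclusion hAB a ∈ q) (w : K)
    (hAC : A ≤ polyRange B w) (c : ↥(polyRange B w))
    (hc : c ∈ p.map (Subring.inclusion hAC)) :
    ∃ G : Polynomial ↥B, (∀ k, G.coeff k ∈ q) ∧ Polynomial.eval₂ B.subtype w G = (c : K) := by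
  let J : Ideal ↥(polyRange B w) :=
    { carrier := {c | ∃ G : Polynomial ↥B, (∀ k, G.coeff k ∈ q) ∧
        Polynomial.eval₂ B.subtype w G = (c : K)}
      add_mem' := by
        rintro c₁ c₂ ⟨G₁, hG₁, hE₁⟩ ⟨G₂, hG₂, hE₂⟩
        exact ⟨G₁ + G₂, fun k => by rw [Polynomial.coeff_add]; exact q.add_mem (hG₁ k) (hG₂ k),
          by rw [Polynomial.eval₂_add, hE₁, hE₂]; rfl⟩
      zero_mem' := ⟨0, fun k => by simp [q.zero_mem], by simp⟩
      smul_mem' := by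
        rintro c' c ⟨G, hG, hE⟩
        obtain ⟨F, hF⟩ := c'.2
        refine ⟨F * G, fun k => ?_, ?_⟩
        · rw [Polynomial.coeff_mul]
          exact Ideal.sum_mem q (fun t _ => q.mul_mem_left _ (hG t.2))
        · rw [Polynomial.eval₂_mul, hE]
          show _ * _ = ((c' * c : ↥(polyRange B w)) : K)
          push_cast
          rw [show Polynomial.eval₂ B.subtype w F = (c' : K) from hF] }
  have hmaple : p.map (Subring.inclusion hAC) ≤ J := by
    rw [Ideal.map_le_iff_le_comap]
    intro a ha
    refine ⟨Polynomial.C (Subring.inclusion hAB a), fun k => ?_, ?_⟩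
    · rw [Polynomial.coeff_C]
      split
      · exact hpq a ha
      · exact q.zero_mem
    · rw [Polynomial.eval₂_C]
      rfl
  exact hmaple hc

theorem unit_of_one_sub {K : Type*} [Field K] (A : Subring K) (m : Ideal A) (hmp : m.IsPrime)
    (q : Ideal ↥(locSubring A m hmp)) (hq : q ≠ ⊤)
    (b : ↥(locSubring A m hmp)) (hb : b ∈ q) : IsUnit (1 - b) := by
  obtain ⟨α, s, hs, hbeq⟩ : ∃ x y : ↥A, y ∉ m ∧ (b : K) = (x : K) / (y : K) := b.2
  have hsK : (s : K) ≠ 0 := fun h =>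
    hs (by rw [show s = 0 from Subtype.ext h]; exact m.zero_mem)
  by_cases hα : α ∈ m
  · have h1 : s - α ∉ m := fun hh =>
      hs (by have := m.add_mem hh hα; simpa using this)
    have h1K : ((s - α : ↥A) : K) ≠ 0 := fun h =>
      h1 (by rw [show s - α = 0 from Subtype.ext h]; exact m.zero_mem)
    have h1K' : (s : K) - (α : K) ≠ 0 := by push_cast at h1K; exact h1K
    refine IsUnit.of_mul_eq_one (a := _) ⟨(s : K) / ((s - α : ↥A) : K), ⟨s, s - α, h1, rfl⟩⟩ ?_
    apply Subtype.ext
    push_cast [hbeq]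
    field_simp
  · have hαK : (α : K) ≠ 0 := fun h =>
      hα (by rw [show α = 0 from Subtype.ext h]; exact m.zero_mem)
    have hbu : IsUnit b := by
      refine IsUnit.of_mul_eq_one (a := _) ⟨(s : K) / (α : K), ⟨s, α, hα, rfl⟩⟩ ?_
      apply Subtype.ext
      push_cast [hbeq]
      field_simp
    exact absurd (q.eq_top_of_isUnit_mem hb hbu) hq

theorem key {K : Type*} [Field K] (A B : Subring K) (hAB : A ≤ B)
    (h : ∀ p : Ideal A, p.IsPrime → IsStraightAt A p)
    (q : Ideal ↥B) (hq : q.IsPrime)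
    (hunit : ∀ b : ↥B, b ∈ q → IsUnit (1 - b))
    (x y : ↥A) (hx : x ∈ q.comap (Subring.inclusion hAB))
    (hy : y ∉ q.comap (Subring.inclusion hAB)) :
    (x : K) / (y : K) ∈ B := by
  haveI := hq
  set p := q.comap (Subring.inclusion hAB) with hp
  have hpprime : p.IsPrime := Ideal.IsPrime.comap (Subring.inclusion hAB)
  have hyK : (y : K) ≠ 0 := fun h0 => hy (by rw [show y = 0 from Subtype.ext h0]; exact p.zero_mem)
  by_cases hxK : (x : K) = 0
  · rw [hxK, zero_div]; exact B.zero_mem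
  set z := (x : K) / (y : K) with hzdef
  have hz0 : z ≠ 0 := div_ne_zero hxK hyK
  -- Round 1 : straightness applied to B[z⁻¹] gives an integral equation for z
  have hAC₁ : A ≤ polyRange B z⁻¹ := le_trans hAB (le_polyRange B z⁻¹)
  have hwin : z⁻¹ ∈ polyRange B z⁻¹ := mem_polyRange_self B z⁻¹
  have h1 : (1 : ↥(polyRange B z⁻¹)) ∈ p.map (Subring.inclusion hAC₁) := by
    apply h p hpprime _ hAC₁ y hy 1
    have heq : Subring.inclusion hAC₁ y * 1 = Subring.inclusion hAC₁ x * ⟨z⁻¹, hwin⟩ := by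
      apply Subtype.ext
      show (y : K) * 1 = (x : K) * z⁻¹
      rw [mul_one, hzdef, inv_div, mul_comm, div_mul_cancel₀ _ hxK]
    rw [heq]
    exact Ideal.mul_mem_right _ _ (Ideal.mem_map_of_mem _ hx)
  obtain ⟨G₁, hG₁q, hG₁e⟩ := extract hAB q p (fun a ha => ha) z⁻¹ hAC₁ 1 h1
  set n := G₁.natDegree with hn
  have hsum : ∑ i ∈ Finset.range (n + 1), ((G₁.coeff i : ↥B) : K) * (z ^ i)⁻¹ = (1 : K) := by
    have h0 := Polynomial.eval₂_eq_sum_range (p := G₁) B.subtype z⁻¹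
    rw [hG₁e] at h0
    simpa using h0.symm
  have hzrel : z ^ (n + 1) =
      ∑ i ∈ Finset.range (n + 1), ((G₁.coeff i : ↥B) : K) * z ^ (n + 1 - i) := by
    calc z ^ (n + 1)
        = (∑ i ∈ Finset.range (n + 1), ((G₁.coeff i : ↥B) : K) * (z ^ i)⁻¹) * z ^ (n + 1) := by
          rw [hsum, one_mul]
      _ = ∑ i ∈ Finset.range (n + 1), ((G₁.coeff i : ↥B) : K) * z ^ (n + 1 - i) := by
          rw [Finset.sum_mul]
          refine Finset.sum_congr rfl (fun i hi => ?_)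
          have hi' : i ≤ n := by simpa [Nat.lt_succ_iff] using hi
          have hsplit : z ^ (n + 1 - i) * z ^ i = z ^ (n + 1) := by
            rw [← pow_add]; congr 1; omega
          have hkey : (z ^ i)⁻¹ * z ^ (n + 1) = z ^ (n + 1 - i) := by
            calc (z ^ i)⁻¹ * z ^ (n + 1) = (z ^ i)⁻¹ * (z ^ (n + 1 - i) * z ^ i) := by
                  rw [hsplit]
              _ = z ^ (n + 1 - i) * ((z ^ i)⁻¹ * z ^ i) := by ring
              _ = z ^ (n + 1 - i) := by
                  rw [inv_mul_cancel₀ (pow_ne_zero _ hz0), mul_one]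
          rw [mul_assoc, hkey]
  rw [Finset.sum_range_succ'] at hzrel
  simp only [Nat.add_sub_add_right, Nat.sub_zero] at hzrel
  have hrel2 : (1 - ((G₁.coeff 0 : ↥B) : K)) * z ^ (n + 1) =
      ∑ i ∈ Finset.range n, ((G₁.coeff (i + 1) : ↥B) : K) * z ^ (n - i) := by
    linear_combination hzrel
  obtain ⟨v, hv⟩ := (hunit (G₁.coeff 0) (hG₁q 0)).exists_right_inv
  have hvK : (1 - ((G₁.coeff 0 : ↥B) : K)) * (v : K) = 1 := by
    have h0 := congrArg (fun t : ↥B => (t : K)) hv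
    push_cast at h0
    exact h0
  set e : ℕ → ↥B := fun i => v * G₁.coeff (i + 1) with he
  have heq : ∀ i, e i ∈ q := fun i => q.mul_mem_left v (hG₁q (i + 1))
  have hmonic : z ^ (n + 1) = ∑ i ∈ Finset.range n, ((e i : ↥B) : K) * z ^ (n - i) := by
    have h3 : z ^ (n + 1) = (v : K) * ((1 - ((G₁.coeff 0 : ↥B) : K)) * z ^ (n + 1)) := by
      rw [← mul_assoc, mul_comm (v : K), hvK, one_mul]
    rw [h3, hrel2, Finset.mul_sum]
    refine Finset.sum_congr rfl (fun i _ => ?_)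
    push_cast [he]
    ring
  -- the finitely generated module W = B + Bz + ... + Bz^n
  set W := Submodule.span ↥B (Set.range fun i : Fin (n + 1) => z ^ (i : ℕ)) with hW
  have hpow : ∀ j : ℕ, z ^ j ∈ W := by
    intro j
    induction j using Nat.strong_induction_on with
    | _ j ih =>
      by_cases hj : j ≤ n
      · exact Submodule.subset_span ⟨⟨j, by omega⟩, rfl⟩
      · push_neg at hj
        have hj1 : z ^ j = z ^ (j - (n + 1)) * z ^ (n + 1) := by
          rw [← pow_add]; congr 1; omega
        rw [hj1, hmonic, Finset.mul_sum]
        refine Submodule.sum_mem _ (fun i hi => ?_)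
        have hterm : z ^ (j - (n + 1)) * (((e i : ↥B) : K) * z ^ (n - i)) =
            ((e i : ↥B) : K) * z ^ (j - (n + 1) + (n - i)) := by
          rw [pow_add]; ring
        rw [hterm]
        have hmem := ih (j - (n + 1) + (n - i)) (by have := Finset.mem_range.mp hi; omega)
        exact Submodule.smul_mem _ (e i) hmem
  -- Round 2 : straightness applied to B[z] puts z in q•W
  have hAC₂ : A ≤ polyRange B z := le_trans hAB (le_polyRange B z)
  have hzin : z ∈ polyRange B z := mem_polyRange_self B z
  have h2 : (⟨z, hzin⟩ : ↥(polyRange B z)) ∈ p.map (Subring.inclusion hAC₂) := by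
    apply h p hpprime _ hAC₂ y hy
    have heq2 : Subring.inclusion hAC₂ y * ⟨z, hzin⟩ = Subring.inclusion hAC₂ x := by
      apply Subtype.ext
      show (y : K) * z = (x : K)
      rw [hzdef, mul_comm, div_mul_cancel₀ _ hyK]
    rw [heq2]
    exact Ideal.mem_map_of_mem _ hx
  obtain ⟨G₂, hG₂q, hG₂e⟩ := extract hAB q p (fun a ha => ha) z hAC₂ _ h2
  have hz2 : ∑ k ∈ Finset.range (G₂.natDegree + 1), ((G₂.coeff k : ↥B) : K) * z ^ k = z := by
    have h0 := Polynomial.eval₂_eq_sum_range (p := G₂) B.subtype z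
    rw [hG₂e] at h0
    simpa using h0.symm
  have hzqW : z ∈ q • W := by
    rw [← hz2]
    refine Submodule.sum_mem _ (fun k _ => ?_)
    exact Submodule.smul_mem_smul (hG₂q k) (hpow k)
  have hmulW : ∀ i : ℕ, ∀ t ∈ W, z ^ i * t ∈ W := by
    intro i t ht
    induction ht using Submodule.span_induction with
    | mem w hw =>
      obtain ⟨j, rfl⟩ := hw
      have hj : z ^ i * z ^ (j : ℕ) = z ^ (i + (j : ℕ)) := by rw [pow_add]
      rw [hj]; exact hpow _
    | zero => rw [mul_zero]; exact W.zero_mem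
    | add a b _ _ hpa hpb => rw [mul_add]; exact W.add_mem hpa hpb
    | smul r t' _ hp =>
      have : z ^ i * (r • t') = r • (z ^ i * t') := by
        show z ^ i * ((r : K) * t') = (r : K) * (z ^ i * t'); ring
      rw [this]; exact W.smul_mem r hp
  have hjq : ∀ j : ℕ, 1 ≤ j → z ^ j ∈ q • W := by
    intro j hj
    have hj1 : z ^ j = z ^ (j - 1) * z := by rw [← pow_succ]; congr 1; omega
    rw [hj1]
    refine Submodule.smul_induction_on (p := fun t => z ^ (j - 1) * t ∈ q • W) hzqW ?_ ?_
    · intro r hr t ht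
      have hcomm : z ^ (j - 1) * (r • t) = r • (z ^ (j - 1) * t) := by
        show z ^ (j - 1) * ((r : K) * t) = (r : K) * (z ^ (j - 1) * t); ring
      rw [hcomm]
      exact Submodule.smul_mem_smul hr (hmulW _ _ ht)
    · intro a b ha hb; rw [mul_add]; exact Submodule.add_mem _ ha hb
  -- Nakayama on W / B
  set L : Submodule ↥B K := Submodule.span ↥B {(1 : K)} with hL
  set N₀ := Submodule.map L.mkQ W with hN₀
  have hfg : N₀.FG := by
    rw [hN₀, hW]
    exact (Submodule.fg_span (Set.finite_range _)).map _
  have hle : N₀ ≤ q • N₀ := by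
    rintro ξ hξ
    rw [hN₀] at hξ
    obtain ⟨t, ht, rfl⟩ := hξ
    induction ht using Submodule.span_induction with
    | mem w hw =>
      obtain ⟨i, rfl⟩ := hw
      show L.mkQ (z ^ (i : ℕ)) ∈ q • N₀
      by_cases hi0 : (i : ℕ) = 0
      · have hz1 : z ^ (i : ℕ) = (1 : K) := by rw [hi0, pow_zero]
        rw [hz1]
        have h00 : L.mkQ (1 : K) = 0 := by
          rw [Submodule.mkQ_apply, Submodule.Quotient.mk_eq_zero]
          exact Submodule.mem_span_singleton_self 1
        rw [h00]; exact Submodule.zero_mem _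
      · have hmem : L.mkQ (z ^ (i : ℕ)) ∈ Submodule.map L.mkQ (q • W) :=
          Submodule.mem_map_of_mem (hjq _ (by omega))
        rw [Submodule.map_smul''] at hmem
        rw [← hN₀] at hmem
        exact hmem
    | zero => rw [map_zero]; exact Submodule.zero_mem _
    | add a b _ _ hpa hpb => rw [map_add]; exact Submodule.add_mem _ hpa hpb
    | smul r t' _ hp => rw [map_smul]; exact Submodule.smul_mem _ r hp
  have hjac : q ≤ (⊥ : Ideal ↥B).jacobson := by
    intro b hb
    rw [Ideal.mem_jacobson_bot]
    intro c
    have h1 : -(b * c) ∈ q := neg_mem (q.mul_mem_right c hb)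
    have h2' := hunit _ h1
    simpa [sub_neg_eq_add, add_comm] using h2'
  have hbot : N₀ = ⊥ := Submodule.eq_bot_of_le_smul_of_le_jacobson_bot q N₀ hfg hle hjac
  have hzL : z ∈ L := by
    have hmem : L.mkQ z ∈ N₀ := by
      rw [hN₀]
      exact Submodule.mem_map_of_mem (by simpa using hpow 1)
    rw [hbot, Submodule.mem_bot] at hmem
    rwa [Submodule.mkQ_apply, Submodule.Quotient.mk_eq_zero] at hmem
  obtain ⟨b, hbz⟩ := Submodule.mem_span_singleton.mp hzL
  have hbz' : (b : K) = z := by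
    have h0 : (b : K) * 1 = z := hbz
    simpa using h0
  rw [← hbz']
  exact b.2

/-- Every straight domain is locally divided: if every prime ideal of the domain `A`
(with fraction field `K`) is straight, then for every maximal ideal `m` of `A` the
localization `A_m` (as a subring of `K`) is a divided domain, i.e. every prime ideal
`q` of `A_m` satisfies `q·(A_m)_q = q`. -/
theorem stmt8 {K : Type*} [Field K] (A : Subring K) [IsFractionRing ↥A K]
    (h : ∀ p : Ideal A, p.IsPrime → IsStraightAt A p) :
    ∀ (m : Ideal A) (hm : m.IsMaximal) (q : Ideal (locSubring A m hm.isPrime)),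
      q.IsPrime →
        locSet (locSubring A m hm.isPrime) q q =
          Subtype.val '' (q : Set ↥(locSubring A m hm.isPrime)) := by
  intro m hm q hq
  have hAB : A ≤ locSubring A m hm.isPrime := by
    intro a ha
    exact ⟨⟨a, ha⟩, 1, fun hc => hm.isPrime.ne_top (m.eq_top_of_isUnit_mem hc isUnit_one), by simp⟩
  ext zz
  constructor
  · rintro ⟨ξ, hξ, η, hη, rfl⟩
    obtain ⟨α, s, hs, hξeq⟩ : ∃ x y : ↥A, y ∉ m ∧ (ξ : K) = (x : K) / (y : K) := ξ.2
    obtain ⟨γ, t, ht, hηeq⟩ : ∃ x y : ↥A, y ∉ m ∧ (η : K) = (x : K) / (y : K) := η.2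
    have hsK : (s : K) ≠ 0 := fun h0 =>
      hs (by rw [show s = 0 from Subtype.ext h0]; exact m.zero_mem)
    have htK : (t : K) ≠ 0 := fun h0 =>
      ht (by rw [show t = 0 from Subtype.ext h0]; exact m.zero_mem)
    have hηK : (η : K) ≠ 0 := fun h0 =>
      hη (by rw [show η = 0 from Subtype.ext h0]; exact q.zero_mem)
    have hγK : (γ : K) ≠ 0 := by
      intro h0
      apply hηK
      rw [hηeq, h0, zero_div]
    have hαp : Subring.inclusion hAB α ∈ q := by
      have hrepr : Subring.inclusion hAB α = ξ * Subring.inclusion hAB s := by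
        apply Subtype.ext
        show (α : K) = (ξ : K) * (s : K)
        rw [hξeq, div_mul_cancel₀ _ hsK]
      rw [hrepr]
      exact q.mul_mem_right _ hξ
    have hsq : Subring.inclusion hAB s ∉ q := by
      intro hc
      have hsu : IsUnit (Subring.inclusion hAB s) := by
        refine IsUnit.of_mul_eq_one (a := _) ⟨(1 : K) / (s : K), 1, s, hs, by push_cast; ring⟩ ?_
        apply Subtype.ext
        show (s : K) * ((1 : K) / (s : K)) = 1
        field_simp
      exact hq.ne_top (q.eq_top_of_isUnit_mem hc hsu)
    have hγq : Subring.inclusion hAB γ ∉ q := by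
      intro hc
      apply hη
      have hrepr : η = Subring.inclusion hAB γ * ⟨(1 : K) / (t : K), 1, t, ht, by push_cast; ring⟩ := by
        apply Subtype.ext
        show (η : K) = (γ : K) * ((1 : K) / (t : K))
        rw [hηeq]; field_simp
      rw [hrepr]
      exact q.mul_mem_right _ hc
    have hx : α * t ∈ q.comap (Subring.inclusion hAB) := by
      show Subring.inclusion hAB (α * t) ∈ q
      rw [map_mul]
      exact q.mul_mem_right _ hαp
    have hy : s * γ ∉ q.comap (Subring.inclusion hAB) := by
      intro hc
      have hmem : Subring.inclusion hAB (s * γ) ∈ q := hc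
      rw [map_mul] at hmem
      rcases hq.mem_or_mem hmem with h' | h'
      exacts [hsq h', hγq h']
    have hzB : ((α * t : ↥A) : K) / ((s * γ : ↥A) : K) ∈ locSubring A m hm.isPrime :=
      key A (locSubring A m hm.isPrime) hAB h q hq
        (fun b hb => unit_of_one_sub A m hm.isPrime q hq.ne_top b hb) _ _ hx hy
    have hzeq : (ξ : K) / (η : K) = ((α * t : ↥A) : K) / ((s * γ : ↥A) : K) := by
      push_cast [hξeq, hηeq]
      field_simp
    have hzB' : (ξ : K) / (η : K) ∈ locSubring A m hm.isPrime := by rw [hzeq]; exact hzB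
    have hmul : η * ⟨(ξ : K) / (η : K), hzB'⟩ = ξ := by
      apply Subtype.ext
      show (η : K) * ((ξ : K) / (η : K)) = (ξ : K)
      field_simp
    have hzq : (⟨(ξ : K) / (η : K), hzB'⟩ : ↥(locSubring A m hm.isPrime)) ∈ q := by
      rcases hq.mem_or_mem (show η * ⟨(ξ : K) / (η : K), hzB'⟩ ∈ q by rw [hmul]; exact hξ) with h' | h'
      · exact absurd h' hη
      · exact h'
    exact ⟨_, hzq, rfl⟩
  · rintro ⟨b, hb, rfl⟩
    refine ⟨b, hb, 1, ?_, ?_⟩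
    · intro hc
      exact hq.ne_top (q.eq_top_of_isUnit_mem hc isUnit_one)
    · simp
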